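/- The elements {a_i x^j : 1 ≤ i ≤ m, 0 ≤ j ≤ q-2} are linearly independent over the ring A = { Σ_l c_l λ^{-l} x^{(q-1)l} : c_l ∈ F_q } ⊆ F_{q^m}[x], where {a_1,...,a_m} is a basis of F_{q^m}/F_q. That is, if Σ_{j=0}^{q-2} Σ_{i=1}^m f_{i,j}(x) a_i x^j = 0 with all f_{i,j} ∈ A, then all f_{i,j} = 0. -/

import Mathlib

/-- The elements a_i x^j (1 ≤ i ≤ m, 0 ≤ j ≤ q-2) are linearly independent
over the ring A = { Σ_l c_l λ^{-l} x^{(q-1)l} : c_l ∈ F_q } ⊆ F_{q^m}[x]. -/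
theorem stmt_7 (p s m : ℕ) [Fact p.Prime] (hs : 0 < s) (hm : 0 < m)
    (F : Type*) [Field F] [Fintype F] [CharP F p]
    (q : ℕ) (hq : q = p ^ s) (hcard : Fintype.card F = q ^ m)
    (lam : F) (hlam : lam ≠ 0)
    (Fq : Subfield F) (hFq : ∀ a : F, a ∈ Fq ↔ a ^ q = a)
    (a : Module.Basis (Fin m) Fq F)
    (f : Fin (q - 1) → Fin m → Polynomial F)
    (hfA : ∀ (j : Fin (q - 1)) (i : Fin m),
      ∃ (k : ℕ) (c : ℕ → F), (∀ l, c l ∈ Fq) ∧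
        f j i = ∑ l ∈ Finset.range (k + 1),
          Polynomial.C (c l * lam⁻¹ ^ l) * Polynomial.X ^ ((q - 1) * l))
    (hsum : ∑ j : Fin (q - 1), ∑ i : Fin m,
      f j i * Polynomial.C (a i) * Polynomial.X ^ (j : ℕ) = 0) :
    ∀ (j : Fin (q - 1)) (i : Fin m), f j i = 0 := by
  have hp2 : 2 ≤ p := (Fact.out : p.Prime).two_le
  have hq2 : 2 ≤ q := by
    subst hq
    calc 2 ≤ p := hp2
    _ = p ^ 1 := (pow_one p).symm
    _ ≤ p ^ s := Nat.pow_le_pow_right (by omega) hs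
  have hQ : 0 < q - 1 := by omega
  -- coefficients of f j i vanish away from multiples of q-1
  have hcoeff0 : ∀ (j : Fin (q-1)) (i : Fin m) (n : ℕ), ¬ (q-1) ∣ n →
      (f j i).coeff n = 0 := by
    intro j i n hn
    obtain ⟨k, c, hc, hf⟩ := hfA j i
    rw [hf, Polynomial.finset_sum_coeff]
    apply Finset.sum_eq_zero
    intro l _
    rw [Polynomial.coeff_C_mul, Polynomial.coeff_X_pow]
    have hne : n ≠ (q-1)*l := fun h => hn ⟨l, h⟩
    simp [hne]
  have hcoeff1 : ∀ (j : Fin (q-1)) (i : Fin m) (l : ℕ), ∃ c ∈ Fq,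
      (f j i).coeff ((q-1)*l) = c * lam⁻¹ ^ l := by
    intro j i l
    obtain ⟨k, c, hc, hf⟩ := hfA j i
    rw [hf, Polynomial.finset_sum_coeff]
    by_cases hl : l ∈ Finset.range (k+1)
    · refine ⟨c l, hc l, ?_⟩
      rw [Finset.sum_eq_single l]
      · rw [Polynomial.coeff_C_mul, Polynomial.coeff_X_pow, if_pos rfl, mul_one]
      · intro b _ hb
        rw [Polynomial.coeff_C_mul, Polynomial.coeff_X_pow]
        have hne : (q-1)*l ≠ (q-1)*b := by
          intro h
          exact hb (Nat.eq_of_mul_eq_mul_left hQ h).symm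
        simp [hne]
      · intro h; exact absurd hl h
    · refine ⟨0, Fq.zero_mem, ?_⟩
      rw [zero_mul]
      apply Finset.sum_eq_zero
      intro b hb
      rw [Polynomial.coeff_C_mul, Polynomial.coeff_X_pow]
      have hne : (q-1)*l ≠ (q-1)*b := by
        intro h
        have := Nat.eq_of_mul_eq_mul_left hQ h
        simp only [Finset.mem_range] at hl hb
        omega
      simp [hne]
  have key : ∀ (j : Fin (q-1)) (l : ℕ) (i : Fin m), (f j i).coeff ((q-1)*l) = 0 := by
    intro j l
    set N := (q-1)*l + (j : ℕ) with hN
    have h0 := congrArg (fun P => Polynomial.coeff P N) hsum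
    simp only [Polynomial.coeff_zero, Polynomial.finset_sum_coeff,
      Polynomial.coeff_mul_X_pow', Polynomial.coeff_mul_C] at h0
    rw [Finset.sum_eq_single j] at h0
    · have hjN : (j : ℕ) ≤ N := by omega
      simp only [if_pos hjN] at h0
      have hNj : N - (j : ℕ) = (q-1)*l := by omega
      rw [hNj] at h0
      -- h0 : ∑ i, (f j i).coeff ((q-1)*l) * a i = 0
      choose c hcmem hceq using fun i => hcoeff1 j i l
      have hlne : lam⁻¹ ^ l ≠ 0 := pow_ne_zero _ (inv_ne_zero hlam)
      have h1 : (∑ i, c i * a i) * lam⁻¹ ^ l = 0 := by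
        rw [Finset.sum_mul, ← h0]
        apply Finset.sum_congr rfl
        intro i _
        rw [hceq i]; ring
      have hsum2 : ∑ i, c i * (a i : F) = 0 := (mul_eq_zero.mp h1).resolve_right hlne
      intro i
      set C : Fin m → Fq := fun i => ⟨c i, hcmem i⟩ with hCdef
      have hC : ∑ i, C i • a i = 0 := by
        show ∑ i, ((C i : F) * a i) = 0
        exact hsum2
      have hCi : C i = 0 := Fintype.linearIndependent_iff.mp a.linearIndependent C hC i
      have hci : c i = 0 := by
        have := congrArg (Subtype.val) hCi
        simpa [hCdef] using this
      rw [hceq i, hci, zero_mul]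
    · intro j' _ hj'
      apply Finset.sum_eq_zero
      intro i _
      by_cases hle : (j' : ℕ) ≤ N
      · rw [if_pos hle]
        have hnd : ¬ (q-1) ∣ (N - (j' : ℕ)) := by
          rintro ⟨d, hd⟩
          have heq : (q-1)*l + (j : ℕ) = (q-1)*d + (j' : ℕ) := by omega
          have h2 : ((q-1)*l + (j : ℕ)) % (q-1) = ((q-1)*d + (j' : ℕ)) % (q-1) := by
            rw [heq]
          rw [Nat.mul_add_mod, Nat.mul_add_mod, Nat.mod_eq_of_lt j.isLt,
            Nat.mod_eq_of_lt j'.isLt] at h2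
          exact hj' (Fin.ext h2.symm)
        rw [hcoeff0 j' i _ hnd, zero_mul]
      · rw [if_neg hle]
    · intro h
      exact absurd (Finset.mem_univ j) h
  intro j i
  ext n
  by_cases hdvd : (q-1) ∣ n
  · obtain ⟨l, rfl⟩ := hdvd
    simp [key j l i]
  · simp [hcoeff0 j i n hdvd]
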